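/- Let m, d ≥ 1 be integers with m ≥ 2 and 8·log m ≤ m. Let (X_{ij})_{i∈[m], j∈[d]} and (Y_i)_{i∈[m]} be m·d + m mutually independent real random variables, each standard Gaussian N(0,1). Define the vector θ ∈ ℝ^d by θ_j = (1/√(d·m)) · Σ_{i=1}^m X_{ij}·Y_i for each j ∈ [d] (this is θ = aᵀW for a network with first-layer rows w_i = X_i/√d and second layer a_i = Y_i/√m, the NTK initialization). Then P[ ‖θ‖ > √(8·log m) ] ≤ 2d/m, where ‖·‖ is the Euclidean norm on ℝ^d. -/

import Mathlib

open MeasureTheory ProbabilityTheory Real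


open MeasureTheory ProbabilityTheory


namespace NTK5

noncomputable def pdf1 : ℝ → NNReal := fun x => (gaussianPDFReal 0 1 x).toNNReal

lemma pdf1_meas : Measurable pdf1 := (measurable_gaussianPDFReal 0 1).real_toNNReal

lemma gauss_eq : gaussianReal 0 1 = volume.withDensity (fun x => (pdf1 x : ENNReal)) := by
  rw [gaussianReal_of_var_ne_zero 0 one_ne_zero]
  congr 1

lemma pdf1_eq (x : ℝ) : (pdf1 x : ℝ) = (Real.sqrt (2 * π))⁻¹ * Real.exp (-x ^ 2 / 2) := by
  rw [pdf1, Real.coe_toNNReal _ (gaussianPDFReal_nonneg 0 1 x)]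
  simp [gaussianPDFReal_def]

lemma integral_gauss (g : ℝ → ℝ) :
    ∫ x, g x ∂(gaussianReal 0 1) = ∫ x, (pdf1 x : ℝ) * g x := by
  rw [gauss_eq, integral_withDensity_eq_integral_smul pdf1_meas]
  simp [NNReal.smul_def]

lemma integrable_gauss_iff (g : ℝ → ℝ) :
    Integrable g (gaussianReal 0 1) ↔ Integrable (fun x => (pdf1 x : ℝ) * g x) volume := by
  rw [gauss_eq, integrable_withDensity_iff_integrable_smul pdf1_meas]
  simp [NNReal.smul_def]

end NTK5

namespace NTK5

lemma key1 (s : ℝ) :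
    Integrable (fun x => (pdf1 x : ℝ) * Real.exp (s * x)) volume ∧
    ∫ x, (pdf1 x : ℝ) * Real.exp (s * x) = Real.exp (s ^ 2 / 2) := by
  have hpt : (fun x => (pdf1 x : ℝ) * Real.exp (s * x))
      = fun x => (Real.sqrt (2 * π))⁻¹ * Real.exp (s ^ 2 / 2)
          * Real.exp (-(2⁻¹ : ℝ) * (x - s) ^ 2) := by
    funext x
    rw [pdf1_eq, mul_assoc, mul_assoc, ← Real.exp_add, ← Real.exp_add]
    congr 1
    ring
  have hint : Integrable (fun x => Real.exp (-(2⁻¹ : ℝ) * (x - s) ^ 2)) volume :=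
    (integrable_exp_neg_mul_sq (by norm_num : (0:ℝ) < 2⁻¹)).comp_sub_right s
  constructor
  · rw [hpt]; exact hint.const_mul _
  · rw [hpt, integral_const_mul,
      integral_sub_right_eq_self (μ := volume) (fun y => Real.exp (-(2⁻¹:ℝ) * y ^ 2)) s,
      integral_gaussian]
    have h2π : (0:ℝ) < 2 * π := by positivity
    rw [show π / 2⁻¹ = 2 * π by ring]
    field_simp

lemma key2 (c : ℝ) (hc : c < 1) :
    Integrable (fun x => (pdf1 x : ℝ) * Real.exp (c * x ^ 2 / 2)) volume ∧
    ∫ x, (pdf1 x : ℝ) * Real.exp (c * x ^ 2 / 2) = (Real.sqrt (1 - c))⁻¹ := by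
  have hpt : (fun x => (pdf1 x : ℝ) * Real.exp (c * x ^ 2 / 2))
      = fun x => (Real.sqrt (2 * π))⁻¹ * Real.exp (-((1 - c) / 2) * x ^ 2) := by
    funext x
    rw [pdf1_eq, mul_assoc, ← Real.exp_add]
    congr 1
    ring
  have hb : (0:ℝ) < (1 - c) / 2 := by linarith
  constructor
  · rw [hpt]; exact (integrable_exp_neg_mul_sq hb).const_mul _
  · rw [hpt, integral_const_mul, integral_gaussian,
      show π / ((1 - c) / 2) = 2 * π / (1 - c) by rw [div_div_eq_mul_div]; ring_nf,
      Real.sqrt_div' (2 * π) (by linarith : (0:ℝ) ≤ 1 - c)]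
    have h2π : (0:ℝ) < Real.sqrt (2 * π) := Real.sqrt_pos.2 (by positivity)
    field_simp

end NTK5

namespace NTK5

lemma int_lin (s : ℝ) : Integrable (fun x => Real.exp (s * x)) (gaussianReal 0 1) :=
  (integrable_gauss_iff _).2 (key1 s).1

lemma intval_lin (s : ℝ) :
    ∫ x, Real.exp (s * x) ∂(gaussianReal 0 1) = Real.exp (s ^ 2 / 2) :=
  (integral_gauss _).trans (key1 s).2

lemma int_quad {c : ℝ} (hc : c < 1) :
    Integrable (fun x => Real.exp (c * x ^ 2 / 2)) (gaussianReal 0 1) :=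
  (integrable_gauss_iff _).2 (key2 c hc).1

lemma intval_quad {c : ℝ} (hc : c < 1) :
    ∫ x, Real.exp (c * x ^ 2 / 2) ∂(gaussianReal 0 1) = (Real.sqrt (1 - c))⁻¹ :=
  (integral_gauss _).trans (key2 c hc).2

lemma prod_core (s : ℝ) (hs : s ^ 2 < 1) :
    Integrable (fun p : ℝ × ℝ => Real.exp (s * (p.1 * p.2)))
      ((gaussianReal 0 1).prod (gaussianReal 0 1)) ∧
    ∫ p, Real.exp (s * (p.1 * p.2)) ∂((gaussianReal 0 1).prod (gaussianReal 0 1))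
      = (Real.sqrt (1 - s ^ 2))⁻¹ := by
  set γ := gaussianReal 0 1
  have hsm : AEStronglyMeasurable (fun p : ℝ × ℝ => Real.exp (s * (p.1 * p.2))) (γ.prod γ) :=
    (Real.continuous_exp.comp ((continuous_const.mul
      (continuous_fst.mul continuous_snd)))).aestronglyMeasurable
  have hsec : ∀ x : ℝ, (fun y => Real.exp (s * (x * y))) = fun y => Real.exp ((s * x) * y) := by
    intro x; funext y; ring_nf
  have hintx : ∀ x : ℝ, ∫ y, Real.exp (s * (x * y)) ∂γ = Real.exp (s ^ 2 * x ^ 2 / 2) := by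
    intro x
    rw [hsec x, intval_lin (s * x)]
    congr 1
    ring
  have hint : Integrable (fun p : ℝ × ℝ => Real.exp (s * (p.1 * p.2))) (γ.prod γ) := by
    rw [integrable_prod_iff hsm]
    constructor
    · refine Filter.Eventually.of_forall fun x => ?_
      rw [hsec x]
      exact int_lin (s * x)
    · have : (fun x => ∫ y, ‖Real.exp (s * (x * y))‖ ∂γ)
          = fun x => Real.exp (s ^ 2 * x ^ 2 / 2) := by
        funext x
        simp_rw [Real.norm_eq_abs, Real.abs_exp]
        exact hintx x
      rw [this]
      exact int_quad hs
  refine ⟨hint, ?_⟩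
  rw [integral_prod _ hint]
  simp_rw [hintx]
  exact intval_quad hs

end NTK5

namespace NTK5

variable {Ω : Type*} [MeasurableSpace Ω] {μ : Measure Ω}

lemma term_mgf [IsProbabilityMeasure μ] {U V : Ω → ℝ} (hU : Measurable U) (hV : Measurable V)
    (hind : IndepFun U V μ) (hlU : Measure.map U μ = gaussianReal 0 1)
    (hlV : Measure.map V μ = gaussianReal 0 1) (s : ℝ) (hs : s ^ 2 < 1) :
    Integrable (fun ω => Real.exp (s * (U ω * V ω))) μ ∧
    ∫ ω, Real.exp (s * (U ω * V ω)) ∂μ = (Real.sqrt (1 - s ^ 2))⁻¹ := by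
  have hpair : Measurable (fun ω => (U ω, V ω)) := hU.prodMk hV
  have hmap : μ.map (fun ω => (U ω, V ω)) = (gaussianReal 0 1).prod (gaussianReal 0 1) := by
    rw [(indepFun_iff_map_prod_eq_prod_map_map hU.aemeasurable hV.aemeasurable).1 hind,
      hlU, hlV]
  have hcont : Continuous (fun p : ℝ × ℝ => Real.exp (s * (p.1 * p.2))) :=
    Real.continuous_exp.comp (continuous_const.mul (continuous_fst.mul continuous_snd))
  have hsm : AEStronglyMeasurable (fun p : ℝ × ℝ => Real.exp (s * (p.1 * p.2)))
      (μ.map (fun ω => (U ω, V ω))) := hcont.aestronglyMeasurable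
  constructor
  · have := (integrable_map_measure hsm hpair.aemeasurable).1 ?_
    · exact this
    · rw [hmap]; exact (prod_core s hs).1
  · have h1 : ∫ ω, Real.exp (s * (U ω * V ω)) ∂μ
        = ∫ p, Real.exp (s * (p.1 * p.2)) ∂(μ.map (fun ω => (U ω, V ω))) :=
      (integral_map hpair.aemeasurable hsm).symm
    rw [h1, hmap, (prod_core s hs).2]

end NTK5

namespace NTK5

lemma inv_sqrt_le_exp {x : ℝ} (h0 : 0 ≤ x) (h2 : x ≤ 1/2) :
    (Real.sqrt (1 - x))⁻¹ ≤ Real.exp x := by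
  have hx1 : (0:ℝ) < 1 - x := by linarith
  have h1 : Real.exp (-(2 * x)) ≤ 1 - x := by
    have ha : 1 + 2 * x ≤ Real.exp (2 * x) := by
      have := Real.add_one_le_exp (2 * x); linarith
    have hpos : (0:ℝ) < 1 + 2 * x := by linarith
    have hb : (1 + 2 * x)⁻¹ ≤ 1 - x := by
      rw [inv_le_iff_one_le_mul₀ hpos]
      nlinarith
    calc Real.exp (-(2 * x)) = (Real.exp (2 * x))⁻¹ := by rw [Real.exp_neg]
      _ ≤ (1 + 2 * x)⁻¹ := by
          apply inv_anti₀ hpos ha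
      _ ≤ 1 - x := hb
  have h3 : Real.exp (-x) ≤ Real.sqrt (1 - x) := by
    have : Real.exp (-(2 * x)) = (Real.exp (-x)) ^ 2 := by
      rw [sq, ← Real.exp_add]
      congr 1
      ring
    calc Real.exp (-x) = Real.sqrt ((Real.exp (-x)) ^ 2) :=
          (Real.sqrt_sq (Real.exp_nonneg _)).symm
      _ ≤ Real.sqrt (1 - x) := Real.sqrt_le_sqrt (by rw [← this]; exact h1)
  calc (Real.sqrt (1 - x))⁻¹ ≤ (Real.exp (-x))⁻¹ :=
        inv_anti₀ (Real.exp_pos _) h3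
    _ = Real.exp x := by rw [Real.exp_neg, inv_inv]

end NTK5

namespace NTK5

variable {Ω : Type*} [MeasurableSpace Ω] {μ : Measure Ω} {m d : ℕ}

lemma indep_T [IsProbabilityMeasure μ]
    (X : Fin m → Fin d → Ω → ℝ) (Y : Fin m → Ω → ℝ)
    (hX : ∀ i j, Measurable (X i j)) (hY : ∀ i, Measurable (Y i))
    (hindep : iIndepFun (m := fun _ : (Fin m × Fin d) ⊕ Fin m => (inferInstance : MeasurableSpace ℝ))
      (Sum.elim (fun p => X p.1 p.2) Y) μ) (j : Fin d) :
    iIndepFun (m := fun _ : Fin m => (inferInstance : MeasurableSpace ℝ))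
      (fun i ω => X i j ω * Y i ω) μ := by
  classical
  set pisys : Fin m → Set (Set Ω) := fun i =>
    {s | ∃ A B : Set ℝ, MeasurableSet A ∧ MeasurableSet B ∧ s = X i j ⁻¹' A ∩ Y i ⁻¹' B}
    with hpis
  have hpi : ∀ i, IsPiSystem (pisys i) := by
    intro i s hs t ht _
    obtain ⟨A, B, hA, hB, rfl⟩ := hs
    obtain ⟨A', B', hA', hB', rfl⟩ := ht
    refine ⟨A ∩ A', B ∩ B', hA.inter hA', hB.inter hB', ?_⟩
    ext ω
    simp only [Set.mem_inter_iff, Set.mem_preimage]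
    tauto
  set mS : Fin m → MeasurableSpace Ω := fun i => MeasurableSpace.generateFrom (pisys i) with hmS
  have h_le : ∀ i, mS i ≤ ‹MeasurableSpace Ω› := by
    intro i
    refine MeasurableSpace.generateFrom_le ?_
    rintro s ⟨A, B, hA, hB, rfl⟩
    exact ((hX i j) hA).inter ((hY i) hB)
  have h_indS : iIndepSets pisys μ := by
    rw [iIndepSets_iff]
    intro S f' hf'
    have h : ∀ i, ∃ AB : Set ℝ × Set ℝ, MeasurableSet AB.1 ∧ MeasurableSet AB.2 ∧
        (i ∈ S → f' i = X i j ⁻¹' AB.1 ∩ Y i ⁻¹' AB.2) := by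
      intro i
      by_cases hi : i ∈ S
      · obtain ⟨A, B, hA, hB, hs⟩ := hf' i hi
        exact ⟨(A, B), hA, hB, fun _ => hs⟩
      · exact ⟨(Set.univ, Set.univ), .univ, .univ, fun h => absurd h hi⟩
    choose AB hA hB hEq using h
    set g : ((Fin m × Fin d) ⊕ Fin m) → Set Ω :=
      Sum.elim (fun p => X p.1 p.2 ⁻¹' (AB p.1).1) (fun i => Y i ⁻¹' (AB i).2) with hg
    set S₁ : Finset ((Fin m × Fin d) ⊕ Fin m) :=
      S.image (fun i => Sum.inl (i, j)) with hS₁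
    set S₂ : Finset ((Fin m × Fin d) ⊕ Fin m) := S.image Sum.inr with hS₂
    have hinj₁ : Function.Injective (fun i : Fin m => (Sum.inl (i, j) :
        (Fin m × Fin d) ⊕ Fin m)) := fun a b hab => by simpa using hab
    have hinj₂ : Function.Injective (Sum.inr : Fin m → (Fin m × Fin d) ⊕ Fin m) :=
      Sum.inr_injective
    have hdisj : Disjoint S₁ S₂ := by
      rw [Finset.disjoint_left]
      intro k hk₁ hk₂
      simp only [hS₁, hS₂, Finset.mem_image] at hk₁ hk₂
      obtain ⟨a, _, rfl⟩ := hk₁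
      obtain ⟨b, _, hb⟩ := hk₂
      exact Sum.inr_ne_inl hb
    have hset : ⋂ i ∈ S, f' i = ⋂ k ∈ S₁ ∪ S₂, g k := by
      ext ω
      simp only [Set.mem_iInter, Finset.mem_union, hS₁, hS₂, Finset.mem_image]
      constructor
      · rintro hω k (⟨i, hi, rfl⟩ | ⟨i, hi, rfl⟩)
        · have := hω i hi
          rw [hEq i hi] at this
          exact this.1
        · have := hω i hi
          rw [hEq i hi] at this
          exact this.2
      · intro hω i hi
        rw [hEq i hi]
        exact ⟨hω _ (Or.inl ⟨i, hi, rfl⟩), hω _ (Or.inr ⟨i, hi, rfl⟩)⟩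
    have hmeasg : ∀ k ∈ S₁ ∪ S₂,
        MeasurableSet[(inferInstance : MeasurableSpace ℝ).comap
          (Sum.elim (fun p => X p.1 p.2) Y k)] (g k) := by
      intro k hk
      rcases Finset.mem_union.1 hk with hk | hk
      · simp only [hS₁, Finset.mem_image] at hk
        obtain ⟨i, hi, rfl⟩ := hk
        exact ⟨(AB i).1, hA i, rfl⟩
      · simp only [hS₂, Finset.mem_image] at hk
        obtain ⟨i, hi, rfl⟩ := hk
        exact ⟨(AB i).2, hB i, rfl⟩
    calc μ (⋂ i ∈ S, f' i) = μ (⋂ k ∈ S₁ ∪ S₂, g k) := by rw [hset]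
      _ = ∏ k ∈ S₁ ∪ S₂, μ (g k) := hindep.meas_biInter hmeasg
      _ = (∏ k ∈ S₁, μ (g k)) * ∏ k ∈ S₂, μ (g k) := Finset.prod_union hdisj
      _ = (∏ i ∈ S, μ (X i j ⁻¹' (AB i).1)) * ∏ i ∈ S, μ (Y i ⁻¹' (AB i).2) := by
          rw [hS₁, hS₂, Finset.prod_image (fun a _ b _ hab => hinj₁ hab),
            Finset.prod_image (fun a _ b _ hab => hinj₂ hab)]
          simp only [hg, Sum.elim_inl, Sum.elim_inr]
      _ = ∏ i ∈ S, (μ (X i j ⁻¹' (AB i).1) * μ (Y i ⁻¹' (AB i).2)) :=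
          (Finset.prod_mul_distrib).symm
      _ = ∏ i ∈ S, μ (f' i) := by
          refine Finset.prod_congr rfl fun i hi => ?_
          have hind := hindep.indepFun
            (i := (Sum.inl (i, j) : (Fin m × Fin d) ⊕ Fin m)) (j := Sum.inr i) (by simp)
          rw [hEq i hi]
          exact (hind.meas_inter ⟨(AB i).1, hA i, rfl⟩ ⟨(AB i).2, hB i, rfl⟩).symm
  have h_gen : ∀ i, mS i = MeasurableSpace.generateFrom (pisys i) := fun i => rfl
  have h_iIndep : iIndep mS μ := iIndepSets.iIndep h_le pisys hpi h_gen h_indS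
  rw [iIndepFun_iff]
  intro S f' hf'
  refine h_iIndep.meas_biInter fun i hi => ?_
  have hXm : Measurable[mS i] (X i j) := fun C hC =>
    MeasurableSpace.measurableSet_generateFrom ⟨C, Set.univ, hC, .univ, by simp⟩
  have hYm : Measurable[mS i] (Y i) := fun C hC =>
    MeasurableSpace.measurableSet_generateFrom ⟨Set.univ, C, .univ, hC, by simp⟩
  obtain ⟨C, hC, hCeq⟩ := hf' i hi
  rw [← hCeq]
  exact (hXm.mul hYm) hC

end NTK5


/-- NTK initialization: with `X_{ij}`, `Y_i` (`i ∈ [m]`, `j ∈ [d]`) mutually independent standard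
Gaussians, `m ≥ 2`, `8·log m ≤ m`, the vector `θ ∈ ℝ^d` with
`θ_j = (1/√(d·m))·Σ_i X_{ij}·Y_i` satisfies `P[‖θ‖ > √(8·log m)] ≤ 2d/m`. -/
theorem stmt_5 {Ω : Type*} [MeasurableSpace Ω] (μ : Measure Ω) [IsProbabilityMeasure μ]
    (m d : ℕ) (hm : 2 ≤ m) (hd : 1 ≤ d) (hlog : 8 * Real.log m ≤ m)
    (X : Fin m → Fin d → Ω → ℝ) (Y : Fin m → Ω → ℝ)
    (hX : ∀ i j, Measurable (X i j)) (hY : ∀ i, Measurable (Y i))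
    (hindep : iIndepFun (m := fun _ : (Fin m × Fin d) ⊕ Fin m => (inferInstance : MeasurableSpace ℝ))
      (Sum.elim (fun p => X p.1 p.2) Y) μ)
    (hlawX : ∀ i j, Measure.map (X i j) μ = gaussianReal 0 1)
    (hlawY : ∀ i, Measure.map (Y i) μ = gaussianReal 0 1) :
    μ {ω | Real.sqrt (∑ j : Fin d,
          ((1 / Real.sqrt (d * m)) * ∑ i : Fin m, X i j ω * Y i ω) ^ 2)
        > Real.sqrt (8 * Real.log m)}
      ≤ ENNReal.ofReal (2 * d / m) := by
  classical
  have hm0 : (0:ℝ) < m := by exact_mod_cast Nat.lt_of_lt_of_le Nat.zero_lt_two hm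
  have hm1 : (1:ℝ) < m := by exact_mod_cast Nat.lt_of_lt_of_le Nat.one_lt_two hm
  have hd0 : (0:ℝ) < d := by exact_mod_cast hd
  set L := Real.log m with hL
  have hL0 : 0 < L := Real.log_pos hm1
  set lam := Real.sqrt (2 * L / m) with hlamdef
  set t := Real.sqrt (8 * (m:ℝ) * L) with htdef
  have hlam0 : 0 ≤ lam := Real.sqrt_nonneg _
  have ht0 : 0 ≤ t := Real.sqrt_nonneg _
  have hlamsq : lam ^ 2 = 2 * L / m := Real.sq_sqrt (by positivity)
  have hlamsq_le : lam ^ 2 ≤ 1/4 := by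
    rw [hlamsq, div_le_iff₀ hm0]; linarith
  have hlamsq_lt1 : lam ^ 2 < 1 := lt_of_le_of_lt hlamsq_le (by norm_num)
  have htsq : t ^ 2 = 8 * (m:ℝ) * L := Real.sq_sqrt (by positivity)
  have hlamt : lam * t = 4 * L := by
    rw [hlamdef, htdef, ← Real.sqrt_mul (by positivity),
      show 2 * L / m * (8 * (m:ℝ) * L) = (4 * L) ^ 2 by field_simp; ring]
    exact Real.sqrt_sq (by positivity)
  -- per-coordinate machinery
  set T : Fin d → Fin m → Ω → ℝ := fun j i ω => X i j ω * Y i ω with hT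
  set Sj : Fin d → Ω → ℝ := fun j ω => ∑ i, X i j ω * Y i ω with hSj
  have hTmeas : ∀ j i, Measurable (T j i) := fun j i => (hX i j).mul (hY i)
  have hTind : ∀ j, iIndepFun (m := fun _ : Fin m => (inferInstance : MeasurableSpace ℝ)) (T j) μ :=
    fun j => NTK5.indep_T X Y hX hY hindep j
  have hUV : ∀ (i : Fin m) (j : Fin d), IndepFun (X i j) (Y i) μ := fun i j => by
    have := hindep.indepFun (i := (Sum.inl (i, j) : (Fin m × Fin d) ⊕ Fin m))
      (j := Sum.inr i) (by simp)
    exact this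
  have hper : ∀ (j : Fin d) (i : Fin m) (s : ℝ), s ^ 2 < 1 →
      Integrable (fun ω => Real.exp (s * T j i ω)) μ ∧
      ∫ ω, Real.exp (s * T j i ω) ∂μ = (Real.sqrt (1 - s ^ 2))⁻¹ := fun j i s hs =>
    NTK5.term_mgf (hX i j) (hY i) (hUV i j) (hlawX i j) (hlawY i) s hs
  have hint_sum : ∀ (j : Fin d) (s : ℝ), s ^ 2 < 1 →
      Integrable (fun ω => Real.exp (s * (∑ i, T j i) ω)) μ := fun j s hs =>
    (hTind j).integrable_exp_mul_sum (hTmeas j) (fun i _ => (hper j i s hs).1)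
  have hmgf_sum : ∀ (j : Fin d) (s : ℝ), s ^ 2 < 1 →
      mgf (∑ i, T j i) μ s = ((Real.sqrt (1 - s ^ 2))⁻¹) ^ m := by
    intro j s hs
    rw [(hTind j).mgf_sum (hTmeas j) Finset.univ]
    have : ∀ i : Fin m, mgf (T j i) μ s = (Real.sqrt (1 - s ^ 2))⁻¹ := fun i =>
      (hper j i s hs).2
    simp [this]
  -- numeric bound on the Chernoff quantity
  have hnum : Real.exp (-(lam * t)) * ((Real.sqrt (1 - lam ^ 2))⁻¹) ^ m ≤ 1 / (m:ℝ) ^ 2 := by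
    have h1 : (Real.sqrt (1 - lam ^ 2))⁻¹ ≤ Real.exp (lam ^ 2) :=
      NTK5.inv_sqrt_le_exp (sq_nonneg _) (hlamsq_le.trans (by norm_num))
    have h2 : ((Real.sqrt (1 - lam ^ 2))⁻¹) ^ m ≤ (Real.exp (lam ^ 2)) ^ m := by
      apply pow_le_pow_left₀ (by positivity) h1
    have h3 : (Real.exp (lam ^ 2)) ^ m = Real.exp (2 * L) := by
      rw [← Real.exp_nat_mul, hlamsq]
      congr 1
      field_simp
    calc Real.exp (-(lam * t)) * ((Real.sqrt (1 - lam ^ 2))⁻¹) ^ m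
        ≤ Real.exp (-(lam * t)) * Real.exp (2 * L) := by
          rw [← h3]; exact mul_le_mul_of_nonneg_left h2 (Real.exp_nonneg _)
      _ = Real.exp (-(2 * L)) := by rw [← Real.exp_add, hlamt]; congr 1; ring
      _ = 1 / (m:ℝ) ^ 2 := by
          rw [Real.exp_neg, show (2:ℝ) * L = L + L by ring, Real.exp_add, Real.exp_log hm0]
          rw [sq, one_div]
  -- Chernoff bounds for each coordinate
  have hup : ∀ j : Fin d, μ {ω | t ≤ Sj j ω} ≤ ENNReal.ofReal (1 / (m:ℝ) ^ 2) := by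
    intro j
    have hseteq : {ω | t ≤ Sj j ω} = {ω | t ≤ (∑ i, T j i) ω} := by
      ext ω; simp [hSj, hT, Finset.sum_apply]
    have hch := measure_ge_le_exp_mul_mgf (μ := μ) (X := ∑ i, T j i) t hlam0
      (hint_sum j lam hlamsq_lt1)
    rw [hmgf_sum j lam hlamsq_lt1] at hch
    have hch2 : (μ {ω | t ≤ (∑ i, T j i) ω}).toReal ≤ 1 / (m:ℝ) ^ 2 := by
      refine hch.trans ?_
      rw [neg_mul]
      exact hnum
    rw [hseteq, ← ENNReal.ofReal_toReal (measure_ne_top μ _)]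
    exact ENNReal.ofReal_le_ofReal hch2
  have hdown : ∀ j : Fin d, μ {ω | Sj j ω ≤ -t} ≤ ENNReal.ofReal (1 / (m:ℝ) ^ 2) := by
    intro j
    have hneg_sq : (-lam) ^ 2 < 1 := by rw [neg_pow]; simp [hlamsq_lt1]
    have hseteq : {ω | Sj j ω ≤ -t} = {ω | (∑ i, T j i) ω ≤ -t} := by
      ext ω; simp [hSj, hT, Finset.sum_apply]
    have hch := measure_le_le_exp_mul_mgf (μ := μ) (X := ∑ i, T j i) (-t)
      (neg_nonpos.2 hlam0) (hint_sum j (-lam) hneg_sq)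
    rw [hmgf_sum j (-lam) hneg_sq] at hch
    have hch2 : (μ {ω | (∑ i, T j i) ω ≤ -t}).toReal ≤ 1 / (m:ℝ) ^ 2 := by
      refine hch.trans ?_
      rw [show -(-lam) * -t = -(lam * t) by ring, show (-lam) ^ 2 = lam ^ 2 by ring]
      exact hnum
    rw [hseteq, ← ENNReal.ofReal_toReal (measure_ne_top μ _)]
    exact ENNReal.ofReal_le_ofReal hch2
  -- event inclusion
  have hdm : (0:ℝ) < (d:ℝ) * m := by positivity
  have hsub : {ω | Real.sqrt (∑ j : Fin d,
          ((1 / Real.sqrt (d * m)) * ∑ i : Fin m, X i j ω * Y i ω) ^ 2)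
        > Real.sqrt (8 * L)}
      ⊆ ⋃ j : Fin d, ({ω | t ≤ Sj j ω} ∪ {ω | Sj j ω ≤ -t}) := by
    intro ω hω
    have hsum : 8 * L < ∑ j : Fin d, ((1 / Real.sqrt (d * m)) * Sj j ω) ^ 2 := by
      have := hω
      simp only [Set.mem_setOf_eq, gt_iff_lt] at this
      exact (Real.sqrt_lt_sqrt_iff (by positivity)).1 this
    by_contra hc
    simp only [Set.mem_iUnion, Set.mem_union, Set.mem_setOf_eq, not_exists, not_or,
      not_le] at hc
    have hbound : ∀ j : Fin d, ((1 / Real.sqrt (d * m)) * Sj j ω) ^ 2 ≤ 8 * L / d := by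
      intro j
      obtain ⟨h1, h2⟩ := hc j
      have habs : (Sj j ω) ^ 2 ≤ t ^ 2 := by
        have := sq_lt_sq' h2 h1
        linarith
      have hco : ((1 / Real.sqrt (d * m)) * Sj j ω) ^ 2 = (Sj j ω) ^ 2 / ((d:ℝ) * m) := by
        rw [mul_pow, div_pow, one_pow, Real.sq_sqrt hdm.le]
        ring
      rw [hco]
      rw [div_le_iff₀ hdm]
      rw [htsq] at habs
      rw [div_mul_eq_mul_div, le_div_iff₀ hd0]
      nlinarith
    have : ∑ j : Fin d, ((1 / Real.sqrt (d * m)) * Sj j ω) ^ 2 ≤ 8 * L := by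
      calc ∑ j : Fin d, ((1 / Real.sqrt (d * m)) * Sj j ω) ^ 2
          ≤ ∑ _j : Fin d, (8 * L / d) := Finset.sum_le_sum fun j _ => hbound j
        _ = (d:ℝ) * (8 * L / d) := by
            rw [Finset.sum_const, Finset.card_univ, Fintype.card_fin, nsmul_eq_mul]
        _ = 8 * L := by field_simp
    linarith
  -- final assembly
  calc μ {ω | Real.sqrt (∑ j : Fin d,
          ((1 / Real.sqrt (d * m)) * ∑ i : Fin m, X i j ω * Y i ω) ^ 2)
        > Real.sqrt (8 * L)}
      ≤ μ (⋃ j : Fin d, ({ω | t ≤ Sj j ω} ∪ {ω | Sj j ω ≤ -t})) := measure_mono hsub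
    _ ≤ ∑' j : Fin d, μ ({ω | t ≤ Sj j ω} ∪ {ω | Sj j ω ≤ -t}) := measure_iUnion_le _
    _ = ∑ j : Fin d, μ ({ω | t ≤ Sj j ω} ∪ {ω | Sj j ω ≤ -t}) := tsum_fintype _
    _ ≤ ∑ _j : Fin d, (ENNReal.ofReal (1 / (m:ℝ) ^ 2) + ENNReal.ofReal (1 / (m:ℝ) ^ 2)) :=
        Finset.sum_le_sum fun j _ =>
          le_trans (measure_union_le _ _) (add_le_add (hup j) (hdown j))
    _ = (d : ENNReal) * ENNReal.ofReal (2 / (m:ℝ) ^ 2) := by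
        rw [Finset.sum_const, Finset.card_univ, Fintype.card_fin, nsmul_eq_mul]
        congr 1
        rw [← ENNReal.ofReal_add (by positivity) (by positivity)]
        congr 1
        ring
    _ = ENNReal.ofReal ((d:ℝ) * (2 / (m:ℝ) ^ 2)) := by
        rw [ENNReal.ofReal_mul (by positivity)]
        congr 1
        exact (ENNReal.ofReal_natCast d).symm
    _ ≤ ENNReal.ofReal (2 * d / m) := by
        apply ENNReal.ofReal_le_ofReal
        rw [show (d:ℝ) * (2 / (m:ℝ) ^ 2) = 2 * d / (m:ℝ) ^ 2 by ring]
        apply div_le_div_of_nonneg_left (by positivity) hm0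
        nlinarith
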